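/- For any n ≥ 1, real C₁, C₂, and θ₀, the function u(θ) = -log( √(1 + C₁² + C₂²) + C₁ cos(nθ) + C₂ sin(nθ) ) is well-defined (the argument of the logarithm is positive) and satisfies ∫₀^{2π} e^{u(θ)} dθ = 2π. -/

import Mathlib

open Real

lemma key_identity (a v N nn : ℝ) (hnn : nn ≠ 0) (hA : 0 < a + v)
    (ha1 : 0 < a + 1) (hD : 0 < a + 1 + v) (h2 : N ^ 2 + v ^ 2 = a ^ 2 - 1) :
    (a + v)⁻¹ = 1 - 2 / nn *
      (1 / (1 + (N / (a + 1 + v)) ^ 2) *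
        ((nn * v * (a + 1 + v) + nn * N ^ 2) / (a + 1 + v) ^ 2)) := by
  have hDne : a + 1 + v ≠ 0 := hD.ne'
  have e1 : 1 + (N / (a + 1 + v)) ^ 2 = (2 * (a + 1) * (a + v)) / (a + 1 + v) ^ 2 := by
    rw [div_pow]
    field_simp
    linear_combination h2
  have h3 : nn * v * (a + 1 + v) + nn * N ^ 2 = nn * ((a + 1) * (a + v - 1)) := by
    linear_combination nn * h2
  rw [e1, h3]
  field_simp
  ring

theorem explicit_solution_normalized
    (n : ℕ) (hn : 1 ≤ n) (C₁ C₂ θ₀ : ℝ) :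
    (∀ θ : ℝ, 0 < Real.sqrt (1 + C₁^2 + C₂^2)
        + C₁ * Real.cos (n * θ) + C₂ * Real.sin (n * θ)) ∧
    (∫ θ in (0:ℝ)..(2*π),
        Real.exp (-Real.log (Real.sqrt (1 + C₁^2 + C₂^2)
          + C₁ * Real.cos (n * θ) + C₂ * Real.sin (n * θ))) = 2*π) := by
  set a := Real.sqrt (1 + C₁^2 + C₂^2) with ha
  have ha2 : a ^ 2 = 1 + C₁^2 + C₂^2 := Real.sq_sqrt (by positivity)
  have ha0 : 0 ≤ a := Real.sqrt_nonneg _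
  have ha1 : 1 ≤ a := by nlinarith
  have hpos : ∀ x : ℝ, 0 < a + (C₁ * Real.cos x + C₂ * Real.sin x) := by
    intro x
    have hv : (C₁ * Real.cos x + C₂ * Real.sin x) ^ 2 ≤ a ^ 2 - 1 := by
      nlinarith [Real.sin_sq_add_cos_sq x, sq_nonneg (C₁ * Real.sin x - C₂ * Real.cos x)]
    nlinarith [sq_nonneg (a + (C₁ * Real.cos x + C₂ * Real.sin x))]
  have hpos' : ∀ θ : ℝ, 0 < a + C₁ * Real.cos (n * θ) + C₂ * Real.sin (n * θ) := by
    intro θ; have := hpos (n * θ); linarith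
  refine ⟨hpos', ?_⟩
  have hn0 : (0:ℝ) < (n:ℝ) := by exact_mod_cast hn
  set f : ℝ → ℝ := fun θ => (a + C₁ * Real.cos (n * θ) + C₂ * Real.sin (n * θ))⁻¹ with hf
  set G : ℝ → ℝ := fun θ => θ - (2 / n) * Real.arctan
      ((C₁ * Real.sin (n * θ) - C₂ * Real.cos (n * θ)) /
        (a + 1 + C₁ * Real.cos (n * θ) + C₂ * Real.sin (n * θ))) with hG
  have hderiv : ∀ θ : ℝ, HasDerivAt G (f θ) θ := by
    intro θ
    have hx : HasDerivAt (fun θ : ℝ => (n:ℝ) * θ) (n:ℝ) θ := by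
      simpa using (hasDerivAt_id θ).const_mul (n:ℝ)
    have hcos := hx.cos
    have hsin := hx.sin
    set c := Real.cos ((n:ℝ) * θ) with hc
    set s := Real.sin ((n:ℝ) * θ) with hs
    have hN : HasDerivAt (fun θ : ℝ => C₁ * Real.sin (n * θ) - C₂ * Real.cos (n * θ))
        (C₁ * (c * n) - C₂ * (-s * n)) θ := (hsin.const_mul C₁).sub (hcos.const_mul C₂)
    have hD : HasDerivAt (fun θ : ℝ => a + 1 + C₁ * Real.cos (n * θ) + C₂ * Real.sin (n * θ))
        (0 + C₁ * (-s * n) + C₂ * (c * n)) θ :=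
      ((hasDerivAt_const θ (a + 1)).add (hcos.const_mul C₁)).add (hsin.const_mul C₂)
    have hApos : 0 < a + (C₁ * c + C₂ * s) := hpos _
    have hDpos : 0 < a + 1 + (C₁ * c + C₂ * s) := by linarith
    have hDne : a + 1 + C₁ * c + C₂ * s ≠ 0 := by
      intro h; apply hDpos.ne'; linarith [h.ge, h.le]
    have hdiv := (hN.div hD hDne).arctan
    have hfull := (hasDerivAt_id θ).sub (hdiv.const_mul (2 / (n:ℝ)))
    convert hfull using 1
    case e'_4 => rfl
    case e'_5 => rfl
    case e'_8 => rfl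
    have hpyth : s ^ 2 + c ^ 2 = 1 := Real.sin_sq_add_cos_sq _
    have h2 : (C₁ * s - C₂ * c) ^ 2 + (C₁ * c + C₂ * s) ^ 2 = a ^ 2 - 1 := by
      linear_combination (C₁^2 + C₂^2) * hpyth - ha2
    have hkey := key_identity a (C₁ * c + C₂ * s) (C₁ * s - C₂ * c) (n : ℝ)
      hn0.ne' hApos (by linarith) hDpos h2
    rw [hf]
    simp only [Pi.div_apply, ← hc, ← hs]
    rw [show a + C₁ * c + C₂ * s = a + (C₁ * c + C₂ * s) from by ring, hkey]
    ring
  have hfc : Continuous f := by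
    apply Continuous.inv₀
    · fun_prop
    · intro θ; exact (hpos' θ).ne'
  have hint : ∫ θ in (0:ℝ)..(2*π), f θ = G (2*π) - G 0 :=
    intervalIntegral.integral_eq_sub_of_hasDerivAt (fun θ _ => hderiv θ)
      (hfc.intervalIntegrable _ _)
  calc ∫ θ in (0:ℝ)..(2*π),
        Real.exp (-Real.log (a + C₁ * Real.cos (n * θ) + C₂ * Real.sin (n * θ)))
      = ∫ θ in (0:ℝ)..(2*π), f θ := by
        apply intervalIntegral.integral_congr
        intro θ _
        rw [hf]; simp only
        rw [Real.exp_neg, Real.exp_log (hpos' θ)]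
    _ = G (2*π) - G 0 := hint
    _ = 2*π := by
        have hs2 : Real.sin ((n:ℝ) * (2*π)) = 0 := by
          rw [show (n:ℝ) * (2*π) = ((2*n : ℕ) : ℝ) * π by push_cast; ring]
          exact Real.sin_nat_mul_pi _
        rw [hG]
        simp only [mul_zero, Real.cos_zero, Real.sin_zero, hs2,
          Real.cos_nat_mul_two_pi]
        ring
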